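/- For every even n ≥ 4, if M₁ and M₂ are two independent uniformly chosen random perfect matchings of the complete graph Kₙ, then the probability that the union M₁ ∪ M₂ is a Hamiltonian cycle on the n vertices is at least 2/(n−1). -/

import Mathlib

open scoped Classical

/-- `M` is a perfect matching of the complete graph on `V`: every vertex is adjacent in
`M` to exactly one other vertex. -/
def IsPerfectMatching' {V : Type*} (M : SimpleGraph V) : Prop :=
  ∀ v : V, ∃! w : V, M.Adj v w

/-- The (finite) type of perfect matchings of the complete graph `Kₙ`. -/
abbrev PM (n : ℕ) := {M : SimpleGraph (Fin n) // IsPerfectMatching' M}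

/-- The probability of the event `P` under the uniform distribution on the finite type `Ω`. -/
noncomputable def unifProb {Ω : Type*} [Fintype Ω] (P : Ω → Prop) : ℝ :=
  ((Finset.univ.filter P).card : ℝ) / (Fintype.card Ω : ℝ)

/-- `H` is a (Hamiltonian) cycle on all of its `n` vertices: it is connected and every
vertex has exactly two neighbours. -/
def IsCycleGraph {n : ℕ} (H : SimpleGraph (Fin n)) : Prop :=
  H.Connected ∧ ∀ v : Fin n, (Finset.univ.filter (fun w => H.Adj v w)).card = 2

namespace Stmt15

open Equiv Finset

/-- A fixed-point-free involution on `Fin n`. -/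
def IsPairing {n : ℕ} (f : Fin n → Fin n) : Prop :=
  (∀ v, f (f v) = v) ∧ (∀ v, f v ≠ v)

/-- The matching graph associated to a pairing function. -/
def mkG {n : ℕ} (f : Fin n → Fin n) : SimpleGraph (Fin n) where
  Adj v w := v ≠ w ∧ (f v = w ∨ f w = v)
  symm := ⟨fun v w h => ⟨h.1.symm, h.2.symm⟩⟩
  loopless := ⟨fun v h => h.1 rfl⟩

lemma mkG_adj {n : ℕ} {f : Fin n → Fin n} (hf : IsPairing f) {v w : Fin n} :
    (mkG f).Adj v w ↔ f v = w := by
  constructor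
  · rintro ⟨h1, (h | h)⟩
    · exact h
    · rw [← h, hf.1]
  · rintro rfl
    exact ⟨(hf.2 v).symm, Or.inl rfl⟩

lemma mkG_pm {n : ℕ} {f : Fin n → Fin n} (hf : IsPairing f) :
    IsPerfectMatching' (mkG f) := fun v =>
  ⟨f v, (mkG_adj hf).2 rfl, fun w hw => ((mkG_adj hf).1 hw).symm⟩

/-- The pairings on `Fin n`. -/
def Inv (n : ℕ) := {f : Fin n → Fin n // IsPairing f}

noncomputable instance (n : ℕ) : Fintype (Inv n) := by
  unfold Inv; infer_instance

/-- partner function of a perfect matching -/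
noncomputable def pmFun {n : ℕ} (M : PM n) : Fin n → Fin n := fun v => (M.2 v).choose

lemma pmFun_adj {n : ℕ} (M : PM n) (v : Fin n) : M.1.Adj v (pmFun M v) :=
  (M.2 v).choose_spec.1

lemma pmFun_eq {n : ℕ} (M : PM n) {v w : Fin n} (h : M.1.Adj v w) : pmFun M v = w :=
  ((M.2 v).choose_spec.2 w h).symm

lemma pmFun_pairing {n : ℕ} (M : PM n) : IsPairing (pmFun M) := by
  constructor
  · intro v
    exact pmFun_eq M ((pmFun_adj M v).symm)
  · intro v
    exact (pmFun_adj M v).ne'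

lemma adj_iff_pmFun {n : ℕ} (M : PM n) (v w : Fin n) : M.1.Adj v w ↔ pmFun M v = w := by
  constructor
  · exact pmFun_eq M
  · rintro rfl; exact pmFun_adj M v

lemma pmFun_injective {n : ℕ} : Function.Injective (fun M : PM n => (⟨pmFun M, pmFun_pairing M⟩ : Inv n)) := by
  intro M M' h
  have h' : pmFun M = pmFun M' := congrArg Subtype.val h
  apply Subtype.ext
  ext v w
  rw [adj_iff_pmFun, adj_iff_pmFun, h']

lemma card_pm_le_inv (n : ℕ) : Fintype.card (PM n) ≤ Fintype.card (Inv n) :=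
  Fintype.card_le_of_injective _ pmFun_injective

end Stmt15
namespace Stmt15
open Equiv Finset Nat

section Step
variable {n : ℕ}

/-- embedding of `Fin n` into `Fin (n+2)` missing `Fin.last (n+1)` and `b.castSucc`. -/
def emb (b : Fin (n + 1)) (i : Fin n) : Fin (n + 2) := (b.succAbove i).castSucc

lemma emb_injective (b : Fin (n + 1)) : Function.Injective (emb b) := fun i j h =>
  Fin.succAbove_right_injective (Fin.castSucc_injective _ h)

lemma emb_ne_last (b : Fin (n + 1)) (i : Fin n) : emb b i ≠ Fin.last (n + 1) :=
  (Fin.castSucc_lt_last _).ne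

lemma emb_ne_cast (b : Fin (n + 1)) (i : Fin n) : emb b i ≠ b.castSucc := fun h =>
  Fin.succAbove_ne b i (Fin.castSucc_injective _ h)

lemma emb_surj (b : Fin (n + 1)) (y : Fin (n + 2)) (h1 : y ≠ Fin.last (n + 1))
    (h2 : y ≠ b.castSucc) : ∃ i, emb b i = y := by
  obtain ⟨z, rfl⟩ := Fin.exists_castSucc_eq.mpr h1
  have hz : z ≠ b := fun h => h2 (by rw [h])
  obtain ⟨i, hi⟩ := Fin.exists_succAbove_eq hz
  exact ⟨i, by rw [emb, hi]⟩

variable (f : Fin (n + 2) → Fin (n + 2)) (hf : IsPairing f)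

/-- partner of the last vertex, seen in `Fin (n+1)`. -/
def stepB : Fin (n + 1) := (f (Fin.last (n + 1))).castPred (hf.2 _)

lemma stepB_cast : (stepB f hf).castSucc = f (Fin.last (n + 1)) :=
  Fin.castSucc_castPred _ _

lemma step_ne_last (i : Fin n) : f (emb (stepB f hf) i) ≠ Fin.last (n + 1) := by
  intro h
  have := congrArg f h
  rw [hf.1] at this
  exact emb_ne_cast _ i (this.trans (stepB_cast f hf).symm)

lemma step_ne_cast (i : Fin n) : f (emb (stepB f hf) i) ≠ (stepB f hf).castSucc := by
  intro h
  rw [stepB_cast] at h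
  have := congrArg f h
  rw [hf.1, hf.1] at this
  exact emb_ne_last _ i this

/-- the induced pairing on the remaining `n` vertices -/
noncomputable def stepG : Fin n → Fin n := fun i =>
  (emb_surj (stepB f hf) _ (step_ne_last f hf i) (step_ne_cast f hf i)).choose

lemma stepG_spec (i : Fin n) : emb (stepB f hf) (stepG f hf i) = f (emb (stepB f hf) i) :=
  (emb_surj (stepB f hf) _ (step_ne_last f hf i) (step_ne_cast f hf i)).choose_spec

lemma stepG_pairing : IsPairing (stepG f hf) := by
  constructor
  · intro i
    apply emb_injective (stepB f hf)
    rw [stepG_spec, stepG_spec, hf.1]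
  · intro i h
    have := stepG_spec f hf i
    rw [h] at this
    exact hf.2 _ this.symm

/-- the step map `Inv (n+2) → Fin (n+1) × Inv n`. -/
noncomputable def step (F : Inv (n + 2)) : Fin (n + 1) × Inv n :=
  (stepB F.1 F.2, ⟨stepG F.1 F.2, stepG_pairing F.1 F.2⟩)

lemma step_injective : Function.Injective (step (n := n)) := by
  rintro ⟨f, hf⟩ ⟨f', hf'⟩ h
  have hB : stepB f hf = stepB f' hf' := congrArg Prod.fst h
  have hG : stepG f hf = stepG f' hf' := congrArg Subtype.val (congrArg Prod.snd h)
  apply Subtype.ext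
  show f = f'
  funext v
  by_cases h1 : v = Fin.last (n + 1)
  · subst h1
    rw [← stepB_cast f hf, ← stepB_cast f' hf', hB]
  by_cases h2 : v = (stepB f hf).castSucc
  · subst h2
    have e1 : f ((stepB f hf).castSucc) = Fin.last (n + 1) := by
      rw [stepB_cast, hf.1]
    have e2 : f' ((stepB f hf).castSucc) = Fin.last (n + 1) := by
      rw [hB, stepB_cast, hf'.1]
    rw [e1, e2]
  · obtain ⟨i, rfl⟩ := emb_surj (stepB f hf) v h1 h2
    have e1 := stepG_spec f hf i
    have e2 := stepG_spec f' hf' i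
    rw [← hB, ← hG] at e2
    rw [← e1, ← e2]

lemma card_inv_step : Fintype.card (Inv (n + 2)) ≤ (n + 1) * Fintype.card (Inv n) := by
  have := Fintype.card_le_of_injective _ (step_injective (n := n))
  rwa [Fintype.card_prod, Fintype.card_fin] at this

lemma card_inv_zero : Fintype.card (Inv 0) ≤ 1 := by
  apply Fintype.card_le_one_iff_subsingleton.mpr
  constructor
  intro a b
  apply Subtype.ext
  funext i
  exact i.elim0

lemma card_inv_le : ∀ m : ℕ, Fintype.card (Inv (2 * m)) ≤ (2 * m - 1)‼ := by
  intro m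
  induction m with
  | zero => simpa using card_inv_zero
  | succ m ih =>
    have h1 : 2 * (m + 1) = 2 * m + 2 := by ring
    have h2 : Fintype.card (Inv (2 * m + 2)) ≤ (2 * m + 1) * Fintype.card (Inv (2 * m)) :=
      card_inv_step
    rw [h1, show 2 * m + 2 - 1 = 2 * m + 1 from rfl, Nat.doubleFactorial_add_one]
    exact h2.trans (Nat.mul_le_mul_left _ ih)

end Step
end Stmt15
namespace Stmt15
open Equiv Finset Nat

/-- the standard pairing on an even number of vertices -/
def stdF (m : ℕ) : Fin (2 * m) → Fin (2 * m) := fun i =>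
  ⟨if i.val % 2 = 0 then i.val + 1 else i.val - 1, by
    have := i.isLt; split <;> omega⟩

lemma stdF_pairing (m : ℕ) : IsPairing (stdF m) := by
  constructor
  · intro v
    apply Fin.ext
    show (if (if v.val % 2 = 0 then v.val + 1 else v.val - 1) % 2 = 0
        then (if v.val % 2 = 0 then v.val + 1 else v.val - 1) + 1
        else (if v.val % 2 = 0 then v.val + 1 else v.val - 1) - 1) = v.val
    have := v.isLt
    by_cases h : v.val % 2 = 0 <;> simp only [h, if_true, if_false, if_pos, if_neg] <;>
      split <;> omega
  · intro v h
    have h' := congrArg Fin.val h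
    show False
    simp only [stdF] at h'
    split at h' <;> omega

lemma pm_nonempty {n : ℕ} (hn : Even n) : Nonempty (PM n) := by
  obtain ⟨m, rfl⟩ : ∃ m, n = 2 * m := by
    obtain ⟨r, hr⟩ := hn; exact ⟨r, by omega⟩
  exact ⟨⟨mkG (stdF m), mkG_pm (stdF_pairing m)⟩⟩

lemma card_pm_pos {n : ℕ} (hn : Even n) : 0 < Fintype.card (PM n) :=
  Fintype.card_pos_iff.mpr (pm_nonempty hn)

lemma card_pm_le {n : ℕ} (hn : Even n) : Fintype.card (PM n) ≤ (n - 1)‼ := by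
  obtain ⟨m, rfl⟩ : ∃ m, n = 2 * m := by
    obtain ⟨r, hr⟩ := hn; exact ⟨r, by omega⟩
  exact (card_pm_le_inv _).trans (card_inv_le m)

end Stmt15
namespace Stmt15
open Equiv Equiv.Perm Finset Nat

section Cyc
variable {n : ℕ} {σ : Perm (Fin n)} (v0 : Fin n)

/-- parity class of a vertex along the cycle `σ`, based at `v0`. -/
def Ev (σ : Perm (Fin n)) (v0 v : Fin n) : Prop := ∃ j : ℕ, Even j ∧ (σ ^ j) v0 = v

variable (hc : σ.IsCycle) (hs : σ.support = Finset.univ)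
include hc hs

lemma cyc_ne (v : Fin n) : σ v ≠ v :=
  Equiv.Perm.mem_support.mp (hs ▸ Finset.mem_univ v)

lemma cyc_inv_ne (v : Fin n) : σ⁻¹ v ≠ v := by
  intro h
  have := congrArg σ h
  rw [show σ (σ⁻¹ v) = v from Equiv.apply_symm_apply σ v] at this
  exact cyc_ne hc hs v this.symm

lemma cyc_orderOf : orderOf σ = n := by
  rw [hc.orderOf, hs, Finset.card_univ, Fintype.card_fin]

lemma cyc_fix_pow {d : ℕ} {v : Fin n} (h : (σ ^ d) v = v) : n ∣ d := by
  have h1 : σ ^ d = 1 := (hc.pow_eq_one_iff' (cyc_ne hc hs v)).mpr h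
  exact (cyc_orderOf hc hs) ▸ orderOf_dvd_of_pow_eq_one h1

lemma cyc_surj (v : Fin n) : ∃ j : ℕ, (σ ^ j) v0 = v := by
  obtain ⟨i, hi⟩ := hc.sameCycle (cyc_ne hc hs v0) (cyc_ne hc hs v)
  have hn0 : 0 < n := v0.pos
  refine ⟨(i % (n : ℤ)).toNat, ?_⟩
  have hnz : (n : ℤ) ≠ 0 := by exact_mod_cast hn0.ne'
  have hpow : σ ^ ((i % (n : ℤ)).toNat) = σ ^ i := by
    have hnn : (0 : ℤ) ≤ i % (n : ℤ) := Int.emod_nonneg i hnz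
    rw [← zpow_natCast, Int.toNat_of_nonneg hnn]
    conv_rhs => rw [show i = (n : ℤ) * (i / (n : ℤ)) + i % (n : ℤ) from (Int.mul_ediv_add_emod i _).symm]
    have hσn : σ ^ n = 1 := by
      have h := pow_orderOf_eq_one σ
      rwa [cyc_orderOf hc hs] at h
    rw [zpow_add, zpow_mul, zpow_natCast, hσn]
    simp
  rw [hpow]
  exact hi

lemma cyc_parity (hn2 : Even n) {j j' : ℕ} (h : (σ ^ j) v0 = (σ ^ j') v0) :
    (Even j ↔ Even j') := by
  have key : ∀ a b : ℕ, a ≤ b → (σ ^ a) v0 = (σ ^ b) v0 → (Even a ↔ Even b) := by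
    intro a b hab hh
    have h1 : (σ ^ (b - a)) ((σ ^ a) v0) = (σ ^ a) v0 := by
      rw [← Equiv.Perm.mul_apply, ← pow_add]
      rw [show b - a + a = b from by omega, ← hh]
    have h2 : n ∣ b - a := cyc_fix_pow hc hs h1
    obtain ⟨c, hc2⟩ := hn2
    have h3 : 2 ∣ b - a := (by omega : 2 ∣ n).trans h2
    rw [Nat.even_iff, Nat.even_iff]
    omega
  rcases le_total j j' with hle | hle
  · exact key j j' hle h
  · exact (key j' j hle h.symm).symm

lemma cyc_EvIff (hn2 : Even n) (j : ℕ) : Ev σ v0 ((σ ^ j) v0) ↔ Even j := by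
  constructor
  · rintro ⟨j', hj', h⟩
    exact (cyc_parity v0 hc hs hn2 h).mp hj'
  · intro h
    exact ⟨j, h, rfl⟩

lemma cyc_flip (hn2 : Even n) (v : Fin n) : Ev σ v0 (σ v) ↔ ¬ Ev σ v0 v := by
  obtain ⟨j, rfl⟩ := cyc_surj v0 hc hs v
  have h1 : σ ((σ ^ j) v0) = (σ ^ (j + 1)) v0 := by
    rw [_root_.pow_succ']; rfl
  rw [h1, cyc_EvIff v0 hc hs hn2, cyc_EvIff v0 hc hs hn2]
  exact Nat.even_add_one

lemma cyc_flip' (hn2 : Even n) (v : Fin n) : Ev σ v0 (σ⁻¹ v) ↔ ¬ Ev σ v0 v := by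
  have := cyc_flip v0 hc hs hn2 (σ⁻¹ v)
  rw [show σ (σ⁻¹ v) = v from Equiv.apply_symm_apply σ v] at this
  tauto

/-- the two alternating matchings carried by the cycle `σ`. -/
noncomputable def alt (σ : Perm (Fin n)) (v0 : Fin n) (b : Bool) : Fin n → Fin n := fun v =>
  if (Ev σ v0 v) = (b = true) then σ v else σ⁻¹ v

lemma alt_pairing (hn2 : Even n) (b : Bool) : IsPairing (alt σ v0 b) := by
  constructor
  · intro v
    by_cases h : Ev σ v0 v = (b = true)
    · have h2 : ¬ (Ev σ v0 (σ v) = (b = true)) := by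
        rw [cyc_flip v0 hc hs hn2 v]
        simp only [h, eq_iff_iff] at *
        tauto
      rw [alt, alt, if_pos h, if_neg h2, show σ⁻¹ (σ v) = v from Equiv.symm_apply_apply σ v]
    · have h2 : (Ev σ v0 (σ⁻¹ v) = (b = true)) := by
        rw [cyc_flip' v0 hc hs hn2 v]
        simp only [eq_iff_iff] at *
        tauto
      rw [alt, alt, if_neg h, if_pos h2, show σ (σ⁻¹ v) = v from Equiv.apply_symm_apply σ v]
  · intro v
    rw [alt]
    split
    · exact cyc_ne hc hs v
    · exact cyc_inv_ne hc hs v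

lemma alt_union_adj (hn2 : Even n) (v w : Fin n) :
    ((mkG (alt σ v0 true)) ⊔ (mkG (alt σ v0 false))).Adj v w ↔ (σ v = w ∨ σ⁻¹ v = w) := by
  rw [SimpleGraph.sup_adj, mkG_adj (alt_pairing v0 hc hs hn2 true),
    mkG_adj (alt_pairing v0 hc hs hn2 false), alt, alt]
  by_cases h : Ev σ v0 v
  · simp [h]
  · simp [h]
    exact Or.comm

lemma cyc_ne_inv (hn4 : 4 ≤ n) (v : Fin n) : σ v ≠ σ⁻¹ v := by
  intro h
  have h1 : (σ ^ 2) v = v := by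
    rw [pow_two, Equiv.Perm.mul_apply, h, show σ (σ⁻¹ v) = v from Equiv.apply_symm_apply σ v]
  have := cyc_fix_pow hc hs h1
  have := Nat.le_of_dvd (by norm_num) this
  omega

lemma alt_degree (hn2 : Even n) (hn4 : 4 ≤ n) (v : Fin n) :
    (Finset.univ.filter
      (fun w => ((mkG (alt σ v0 true)) ⊔ (mkG (alt σ v0 false))).Adj v w)).card = 2 := by
  have hset : (Finset.univ.filter
      (fun w => ((mkG (alt σ v0 true)) ⊔ (mkG (alt σ v0 false))).Adj v w)) = {σ v, σ⁻¹ v} := by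
    ext w
    simp only [Finset.mem_filter, Finset.mem_univ, true_and, Finset.mem_insert,
      Finset.mem_singleton, alt_union_adj v0 hc hs hn2]
    constructor
    · rintro (h | h) <;> [left; right] <;> exact h.symm
    · rintro (h | h) <;> [left; right] <;> exact h.symm
  rw [hset, Finset.card_insert_of_notMem (by
    simp only [Finset.mem_singleton]
    exact cyc_ne_inv hc hs hn4 v), Finset.card_singleton]

lemma alt_connected (hn2 : Even n) (hn4 : 4 ≤ n) :
    ((mkG (alt σ v0 true)) ⊔ (mkG (alt σ v0 false))).Connected := by
  have reach : ∀ j : ℕ, ((mkG (alt σ v0 true)) ⊔ (mkG (alt σ v0 false))).Reachable v0 ((σ ^ j) v0) := by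
    intro j
    induction j with
    | zero =>
      simp only [pow_zero, Equiv.Perm.one_apply]
      exact SimpleGraph.Reachable.refl _
    | succ j ih =>
      refine ih.trans (SimpleGraph.Adj.reachable ?_)
      rw [alt_union_adj v0 hc hs hn2]
      left
      rw [_root_.pow_succ']; rfl
  rw [SimpleGraph.connected_iff]
  refine ⟨?_, ⟨v0⟩⟩
  · intro u v
    obtain ⟨ju, hu⟩ := cyc_surj v0 hc hs u
    obtain ⟨jv, hv⟩ := cyc_surj v0 hc hs v
    exact (hu ▸ reach ju).symm.trans (hv ▸ reach jv)

lemma alt_isCycleGraph (hn2 : Even n) (hn4 : 4 ≤ n) :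
    IsCycleGraph ((mkG (alt σ v0 true)) ⊔ (mkG (alt σ v0 false))) := by
  refine ⟨alt_connected v0 hc hs hn2 hn4, fun v => ?_⟩
  have h := alt_degree v0 hc hs hn2 hn4 v
  convert h using 2
  exact Finset.filter_congr_decidable _ _ _

end Cyc
end Stmt15
namespace Stmt15
open Equiv Equiv.Perm Finset Nat

section Inj
variable {n : ℕ} {σ σ' : Perm (Fin n)} (v0 : Fin n)

lemma alt_apply_even (hEv : Ev σ v0 v) :
    alt σ v0 true v = σ v ∧ alt σ v0 false v = σ⁻¹ v := by
  constructor <;> simp [alt, eq_iff_iff, hEv]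

lemma alt_apply_odd (hEv : ¬ Ev σ v0 v) :
    alt σ v0 true v = σ⁻¹ v ∧ alt σ v0 false v = σ v := by
  constructor <;> simp [alt, eq_iff_iff, hEv]

lemma alt_inj (hc : σ.IsCycle) (hs : σ.support = Finset.univ)
    (hc' : σ'.IsCycle) (hs' : σ'.support = Finset.univ) (hn2 : Even n)
    (h0 : alt σ v0 true = alt σ' v0 true) (h1 : alt σ v0 false = alt σ' v0 false) :
    σ = σ' := by
  have walk : ∀ j : ℕ, (σ ^ j) v0 = (σ' ^ j) v0 := by
    intro j
    induction j with
    | zero => simp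
    | succ j ih =>
      have hp : (σ ^ (j + 1)) v0 = σ ((σ ^ j) v0) := by rw [_root_.pow_succ']; rfl
      have hp' : (σ' ^ (j + 1)) v0 = σ' ((σ' ^ j) v0) := by rw [_root_.pow_succ']; rfl
      by_cases hj : Even j
      · have e1 : Ev σ v0 ((σ ^ j) v0) := (cyc_EvIff v0 hc hs hn2 j).mpr hj
        have e2 : Ev σ' v0 ((σ ^ j) v0) := by
          rw [ih]; exact (cyc_EvIff v0 hc' hs' hn2 j).mpr hj
        rw [hp, hp', ← ih, ← (alt_apply_even v0 e1).1, ← (alt_apply_even v0 e2).1, h0]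
      · have e1 : ¬ Ev σ v0 ((σ ^ j) v0) := by
          rw [cyc_EvIff v0 hc hs hn2 j]; exact hj
        have e2 : ¬ Ev σ' v0 ((σ ^ j) v0) := by
          rw [ih, cyc_EvIff v0 hc' hs' hn2 j]; exact hj
        rw [hp, hp', ← ih, ← (alt_apply_odd v0 e1).2, ← (alt_apply_odd v0 e2).2, h1]
  ext v
  obtain ⟨j, rfl⟩ := cyc_surj v0 hc hs v
  have hp : σ ((σ ^ j) v0) = (σ ^ (j + 1)) v0 := by rw [_root_.pow_succ']; rfl
  have hp' : σ' ((σ' ^ j) v0) = (σ' ^ (j + 1)) v0 := by rw [_root_.pow_succ']; rfl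
  rw [hp, walk (j + 1), ← hp', walk j]

lemma mkG_inj {f f' : Fin n → Fin n} (hf : IsPairing f) (hf' : IsPairing f')
    (h : mkG f = mkG f') : f = f' := by
  funext v
  have h1 : (mkG f).Adj v (f v) := (mkG_adj hf).2 rfl
  rw [h] at h1
  exact ((mkG_adj hf').1 h1).symm

end Inj

section Full
variable {k : ℕ}

/-- extension of a permutation of `Fin (k+1)` to `Fin (k+2)` fixing `0`. -/
def tPerm (π : Perm (Fin (k + 1))) : Perm (Fin (k + 2)) :=
  Equiv.Perm.decomposeFin.symm (0, π)

lemma tPerm_zero (π : Perm (Fin (k + 1))) : tPerm π 0 = 0 :=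
  Equiv.Perm.decomposeFin_symm_apply_zero 0 π

/-- the full cycle on `Fin (k+2)` associated to a permutation of `Fin (k+1)`. -/
def fullCyc (π : Perm (Fin (k + 1))) : Perm (Fin (k + 2)) :=
  tPerm π * finRotate (k + 2) * (tPerm π)⁻¹

lemma fullCyc_isCycle (π : Perm (Fin (k + 1))) : (fullCyc π).IsCycle :=
  isCycle_finRotate.conj

lemma fullCyc_support (π : Perm (Fin (k + 1))) : (fullCyc π).support = Finset.univ := by
  rw [fullCyc, Equiv.Perm.support_conj, support_finRotate]
  simp

lemma rot_pow (j : ℕ) : ∀ h : j < k + 2, ((finRotate (k + 2)) ^ j) 0 = ⟨j, h⟩ := by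
  induction j with
  | zero => intro h; apply Fin.ext; simp
  | succ j ih =>
    intro h
    have hj : j < k + 2 := by omega
    have hp : ((finRotate (k + 2)) ^ (j + 1)) 0 = finRotate (k + 2) (((finRotate (k + 2)) ^ j) 0) := by
      rw [_root_.pow_succ']; rfl
    rw [hp, ih hj, finRotate_succ_apply]
    apply Fin.ext
    rw [Fin.val_add_one_of_lt]
    simp [Fin.lt_def]
    omega

lemma comm_eq_one (u : Perm (Fin (k + 2)))
    (hcomm : u * finRotate (k + 2) = finRotate (k + 2) * u) (h0 : u 0 = 0) : u = 1 := by
  apply Equiv.ext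
  intro v
  rw [Equiv.Perm.one_apply]
  have h3 : ((finRotate (k + 2)) ^ v.val) 0 = v := by
    rw [rot_pow v.val v.isLt]
  have hcp : u * (finRotate (k + 2)) ^ v.val = (finRotate (k + 2)) ^ v.val * u :=
    (Commute.pow_right hcomm v.val).eq
  calc u v = (u * (finRotate (k + 2)) ^ v.val) 0 := by rw [Equiv.Perm.mul_apply, h3]
  _ = ((finRotate (k + 2)) ^ v.val * u) 0 := by rw [hcp]
  _ = ((finRotate (k + 2)) ^ v.val) 0 := by rw [Equiv.Perm.mul_apply, h0]
  _ = v := h3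

lemma fullCyc_inj : Function.Injective (fullCyc (k := k)) := by
  intro π ρ h
  have hu : ((tPerm ρ)⁻¹ * tPerm π) * finRotate (k + 2) =
      finRotate (k + 2) * ((tPerm ρ)⁻¹ * tPerm π) := by
    have h2 := congrArg (fun x => (tPerm ρ)⁻¹ * x * tPerm π) h
    simp only [fullCyc] at h2
    group at h2 ⊢
    exact h2

  have h0 : ((tPerm ρ)⁻¹ * tPerm π) 0 = 0 := by
    rw [Equiv.Perm.mul_apply, tPerm_zero]
    exact Equiv.Perm.inv_eq_iff_eq.mpr (tPerm_zero ρ).symm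
  have h1 : (tPerm ρ)⁻¹ * tPerm π = 1 := comm_eq_one _ hu h0
  have h2 : tPerm π = tPerm ρ := (inv_mul_eq_one.mp h1).symm ▸ rfl
  have h3 : ((0 : Fin (k + 2)), π) = ((0 : Fin (k + 2)), ρ) :=
    Equiv.Perm.decomposeFin.symm.injective h2
  exact congrArg Prod.snd h3

end Full
end Stmt15
namespace Stmt15
open Equiv Equiv.Perm Finset Nat

lemma good_lb (n : ℕ) (hn4 : 4 ≤ n) (hn2 : Even n) :
    (n - 1)! ≤ (Finset.univ.filter
      (fun q : PM n × PM n => IsCycleGraph (q.1.val ⊔ q.2.val))).card := by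
  obtain ⟨k, rfl⟩ : ∃ k, n = k + 2 := ⟨n - 2, by omega⟩
  let Φ : Perm (Fin (k + 1)) →
      {q : PM (k + 2) × PM (k + 2) // IsCycleGraph (q.1.val ⊔ q.2.val)} := fun π =>
    ⟨(⟨mkG (alt (fullCyc π) 0 true),
        mkG_pm (alt_pairing 0 (fullCyc_isCycle π) (fullCyc_support π) hn2 true)⟩,
      ⟨mkG (alt (fullCyc π) 0 false),
        mkG_pm (alt_pairing 0 (fullCyc_isCycle π) (fullCyc_support π) hn2 false)⟩),
      alt_isCycleGraph 0 (fullCyc_isCycle π) (fullCyc_support π) hn2 hn4⟩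
  have hinj : Function.Injective Φ := by
    intro π ρ h
    have h' := congrArg Subtype.val h
    have hA : mkG (alt (fullCyc π) 0 true) = mkG (alt (fullCyc ρ) 0 true) :=
      congrArg (fun q => q.1.val) h'
    have hB : mkG (alt (fullCyc π) 0 false) = mkG (alt (fullCyc ρ) 0 false) :=
      congrArg (fun q => q.2.val) h'
    apply fullCyc_inj
    exact alt_inj 0 (fullCyc_isCycle π) (fullCyc_support π) (fullCyc_isCycle ρ)
      (fullCyc_support ρ) hn2
      (mkG_inj (alt_pairing 0 (fullCyc_isCycle π) (fullCyc_support π) hn2 true)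
        (alt_pairing 0 (fullCyc_isCycle ρ) (fullCyc_support ρ) hn2 true) hA)
      (mkG_inj (alt_pairing 0 (fullCyc_isCycle π) (fullCyc_support π) hn2 false)
        (alt_pairing 0 (fullCyc_isCycle ρ) (fullCyc_support ρ) hn2 false) hB)
  calc (k + 2 - 1)! = Fintype.card (Perm (Fin (k + 1))) := by
        rw [Fintype.card_perm, Fintype.card_fin]
        norm_num
  _ ≤ Fintype.card {q : PM (k + 2) × PM (k + 2) // IsCycleGraph (q.1.val ⊔ q.2.val)} :=
      Fintype.card_le_of_injective Φ hinj
  _ = (Finset.univ.filter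
      (fun q : PM (k + 2) × PM (k + 2) => IsCycleGraph (q.1.val ⊔ q.2.val))).card :=
      Fintype.card_subtype _

lemma core_df : ∀ j : ℕ, 2 * (2 * j + 3)‼ ≤ (2 * j + 3) * (2 * j + 2)‼ := by
  intro j
  induction j with
  | zero => norm_num [Nat.doubleFactorial]
  | succ j ih =>
    have e1 : 2 * (j + 1) + 3 = (2 * j + 3) + 2 := by ring
    have e2 : 2 * (j + 1) + 2 = (2 * j + 2) + 2 := by ring
    rw [e1, e2, Nat.doubleFactorial_add_two, Nat.doubleFactorial_add_two]
    calc 2 * ((2 * j + 3 + 2) * (2 * j + 3)‼) = (2 * j + 5) * (2 * (2 * j + 3)‼) := by ring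
    _ ≤ (2 * j + 5) * ((2 * j + 3) * (2 * j + 2)‼) := Nat.mul_le_mul_left _ ih
    _ ≤ (2 * j + 3 + 2) * ((2 * j + 2 + 2) * (2 * j + 2)‼) := by
        have h1 : (2 * j + 3) * (2 * j + 2)‼ ≤ (2 * j + 2 + 2) * (2 * j + 2)‼ :=
          Nat.mul_le_mul_right _ (by omega)
        have h2 : (2 * j + 5) = (2 * j + 3 + 2) := by ring
        rw [← h2]
        exact Nat.mul_le_mul_left _ h1

lemma arith (k : ℕ) (hk2 : Even k) (hk : 2 ≤ k) :
    2 * ((k + 1)‼ * (k + 1)‼) ≤ (k + 1) * (k + 1)! := by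
  obtain ⟨j, rfl⟩ : ∃ j, k = 2 * j + 2 := by
    obtain ⟨c, hc⟩ := hk2; exact ⟨c - 1, by omega⟩
  have hcore := core_df j
  have hfac : (2 * j + 2 + 1)! = (2 * j + 2 + 1)‼ * (2 * j + 2)‼ :=
    Nat.factorial_eq_mul_doubleFactorial (2 * j + 2)
  simp only [show 2 * j + 2 + 1 = 2 * j + 3 from by omega] at hfac ⊢
  calc 2 * ((2 * j + 3)‼ * (2 * j + 3)‼) = (2 * (2 * j + 3)‼) * (2 * j + 3)‼ := by ring
  _ ≤ ((2 * j + 3) * (2 * j + 2)‼) * (2 * j + 3)‼ := Nat.mul_le_mul_right _ hcore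
  _ = (2 * j + 3) * ((2 * j + 3)‼ * (2 * j + 2)‼) := by ring
  _ = (2 * j + 3) * (2 * j + 3)! := by rw [hfac]

end Stmt15

open scoped Nat in
theorem statement_15 : ∀ n : ℕ, 4 ≤ n → Even n →
    unifProb (fun q : PM n × PM n => IsCycleGraph (q.1.val ⊔ q.2.val))
      ≥ 2 / ((n : ℝ) - 1) := by
  intro n hn4 hn2
  have hG := Stmt15.good_lb n hn4 hn2
  have hP := Stmt15.card_pm_le hn2
  have hPpos := Stmt15.card_pm_pos hn2
  unfold unifProb
  rw [Fintype.card_prod]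
  set P := Fintype.card (PM n) with hPdef
  set G := (Finset.univ.filter
      (fun q : PM n × PM n => IsCycleGraph (q.1.val ⊔ q.2.val))).card with hGdef
  have key : 2 * (P * P) ≤ G * (n - 1) := by
    calc 2 * (P * P) ≤ 2 * ((n - 1)‼ * (n - 1)‼) :=
          Nat.mul_le_mul_left 2 (Nat.mul_le_mul hP hP)
    _ ≤ (n - 1) * (n - 1)! := by
        have h := Stmt15.arith (n - 2) (by
          obtain ⟨c, hc⟩ := hn2; exact ⟨c - 1, by omega⟩) (by omega)
        rw [show n - 2 + 1 = n - 1 from by omega] at h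
        exact h
    _ ≤ (n - 1) * G := Nat.mul_le_mul_left _ hG
    _ = G * (n - 1) := Nat.mul_comm _ _
  have hn1 : (0 : ℝ) < (n : ℝ) - 1 := by
    have : (4 : ℝ) ≤ (n : ℝ) := by exact_mod_cast hn4
    linarith
  have hPP : (0 : ℝ) < ((P * P : ℕ) : ℝ) := by
    have : (0 : ℝ) < (P : ℝ) := by exact_mod_cast hPpos
    push_cast
    nlinarith
  rw [ge_iff_le, div_le_div_iff₀ hn1 hPP]
  have hcast : ((n : ℝ) - 1) = ((n - 1 : ℕ) : ℝ) := by
    rw [Nat.cast_sub (by omega)]; norm_num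
  rw [hcast]
  exact_mod_cast key
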